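/- Circle Principle: Let d_0, d_1, …, d_{t−1} be pairwise distinct elements of a set A, and let 0 ≤ i < j ≤ t−1. Then in the lattice Equ(A) of equivalence relations on A, equ(d_i, d_j) equals the meet of the two joins (equ(d_i,d_{i+1}) ⊔ equ(d_{i+1},d_{i+2}) ⊔ … ⊔ equ(d_{j−1},d_j)) and (equ(d_j,d_{j+1}) ⊔ … ⊔ equ(d_{t−2},d_{t−1}) ⊔ equ(d_{t−1},d_0) ⊔ equ(d_0,d_1) ⊔ … ⊔ equ(d_{i−1},d_i)); that is, the join of the atoms along one arc of the cycle d_0,…,d_{t−1} from d_i to d_j, meeted with the join of the atoms along the complementary arc. -/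
import Mathlib

/-- The least equivalence relation on `A` identifying `u` and `v`
(its only nonsingleton block is `{u, v}`; it is `⊥` when `u = v`). -/
def equ {A : Type*} (u v : A) : Setoid A := sInf {s : Setoid A | s u v}

lemma equ_self {A : Type*} (u v : A) : equ u v u v := fun _ hs => hs

lemma equ_le {A : Type*} {u v : A} {s : Setoid A} (h : s u v) : equ u v ≤ s :=
  sInf_le h

/-- setoid with one block `B` -/
def blockS {A : Type*} (B : Set A) : Setoid A :=
  ⟨fun x y => x = y ∨ (x ∈ B ∧ y ∈ B),
   fun _ => Or.inl rfl,
   by rintro x y (rfl | ⟨h1, h2⟩); exacts [Or.inl rfl, Or.inr ⟨h2, h1⟩],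
   by rintro x y z (rfl | ⟨h1, h2⟩) (rfl | ⟨h3, h4⟩)
      exacts [Or.inl rfl, Or.inr ⟨h3, h4⟩, Or.inr ⟨h1, h2⟩, Or.inr ⟨h1, h4⟩]⟩

lemma chain {A : Type*} (J : Setoid A) (d : ℕ → A) (a b : ℕ) (hab : a ≤ b)
    (h : ∀ r, a ≤ r → r < b → J (d r) (d (r + 1))) : J (d a) (d b) := by
  induction b, hab using Nat.le_induction with
  | base => exact J.refl _
  | succ b hb ih =>
      exact J.trans (ih fun r h1 h2 => h r h1 (h2.trans (Nat.lt_succ_self b)))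
        (h b hb (Nat.lt_succ_self _))

theorem circle_principle {A : Type*} (t : ℕ) (d : ℕ → A)
    (hinj : ∀ r < t, ∀ s < t, d r = d s → r = s)
    (i j : ℕ) (hij : i < j) (hjt : j < t) :
    equ (d i) (d j) =
      (⨆ r ∈ Finset.Ico i j, equ (d r) (d (r + 1))) ⊓
      (⨆ r ∈ Finset.Ico j t ∪ Finset.range i, equ (d r) (d ((r + 1) % t))) := by
  set J1 := ⨆ r ∈ Finset.Ico i j, equ (d r) (d (r + 1)) with hJ1
  set J2 := ⨆ r ∈ Finset.Ico j t ∪ Finset.range i, equ (d r) (d ((r + 1) % t)) with hJ2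
  have hedge1 : ∀ r ∈ Finset.Ico i j, J1 (d r) (d (r + 1)) := fun r hr =>
    le_biSup (fun r => equ (d r) (d (r + 1))) hr (equ_self _ _)
  have hedge2 : ∀ r ∈ Finset.Ico j t ∪ Finset.range i, J2 (d r) (d ((r + 1) % t)) :=
    fun r hr => le_biSup (fun r => equ (d r) (d ((r + 1) % t))) hr (equ_self _ _)
  apply le_antisymm
  · refine le_inf (equ_le ?_) (equ_le ?_)
    · exact chain J1 d i j hij.le fun r h1 h2 => hedge1 r (Finset.mem_Ico.2 ⟨h1, h2⟩)
    · -- show J2 (d i) (d j); get J2 (d j) (d i) via the complementary arc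
      refine J2.symm ?_
      have ht2 : 1 ≤ t := le_trans (Nat.one_le_iff_ne_zero.2 (by omega)) (le_of_lt hjt)
      have h1 : J2 (d j) (d (t - 1)) := by
        refine chain J2 d j (t - 1) (by omega) fun r h1 h2 => ?_
        have : (r + 1) % t = r + 1 := Nat.mod_eq_of_lt (by omega)
        rw [← this]
        exact hedge2 r (Finset.mem_union_left _ (Finset.mem_Ico.2 ⟨h1, by omega⟩))
      have h2 : J2 (d (t - 1)) (d 0) := by
        have : (t - 1 + 1) % t = 0 := by
          rw [Nat.sub_add_cancel ht2]; exact Nat.mod_self t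
        rw [← this]
        exact hedge2 (t - 1) (Finset.mem_union_left _ (Finset.mem_Ico.2 ⟨by omega, by omega⟩))
      have h3 : J2 (d 0) (d i) := by
        refine chain J2 d 0 i (Nat.zero_le _) fun r _ h2 => ?_
        have : (r + 1) % t = r + 1 := Nat.mod_eq_of_lt (by omega)
        rw [← this]
        exact hedge2 r (Finset.mem_union_right _ (Finset.mem_range.2 h2))
      exact J2.trans h1 (J2.trans h2 h3)
  · -- J1 ⊓ J2 ≤ equ (d i) (d j)
    set B1 : Set A := {x | ∃ r, i ≤ r ∧ r ≤ j ∧ x = d r} with hB1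
    set B2 : Set A := {x | ∃ r, (j ≤ r ∧ r < t ∨ r ≤ i) ∧ x = d r} with hB2
    have hS1 : J1 ≤ blockS B1 := by
      refine iSup₂_le fun r hr => equ_le ?_
      rw [Finset.mem_Ico] at hr
      exact Or.inr ⟨⟨r, hr.1, hr.2.le, rfl⟩, ⟨r + 1, by omega, by omega, rfl⟩⟩
    have hS2 : J2 ≤ blockS B2 := by
      refine iSup₂_le fun r hr => equ_le ?_
      simp only [Finset.mem_union, Finset.mem_Ico, Finset.mem_range] at hr
      refine Or.inr ⟨⟨r, ?_, rfl⟩, ⟨(r + 1) % t, ?_, rfl⟩⟩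
      · rcases hr with h | h
        · exact Or.inl h
        · exact Or.inr (by omega)
      · rcases hr with h | h
        · rcases eq_or_lt_of_le (Nat.succ_le_of_lt h.2) with he | hl
          · right; rw [← he, Nat.mod_self]; omega
          · left; rw [Nat.mod_eq_of_lt hl]; omega
        · right; rw [Nat.mod_eq_of_lt (by omega)]; omega
    refine le_trans (inf_le_inf hS1 hS2) ?_
    rintro x y ⟨hx1, hx2⟩ s hs
    rcases hx1 with rfl | ⟨⟨r, hir, hrj, rfl⟩, ⟨p, hip, hpj, hy1⟩⟩
    · exact s.refl _
    rcases hx2 with hxy | ⟨⟨r', hr', he⟩, ⟨p', hp', hy2⟩⟩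
    · exact hxy ▸ s.refl (d r)
    -- d r = d r' with both < t
    have hrr' : r = r' := hinj r (by omega) r' (by omega) he
    have hpp' : p = p' := hinj p (by omega) p' (by omega) (hy1 ▸ hy2)
    have hr'' : r = i ∨ r = j := by omega
    have hp'' : p = i ∨ p = j := by omega
    subst hy1
    rcases hr'' with rfl | rfl <;> rcases hp'' with rfl | rfl
    · exact s.refl _
    · exact hs
    · exact s.symm hs
    · exact s.refl _
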